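/- arXiv:1912.02558 — 2 statements merged into one kernel-verified Lean document; each statement's English description precedes it below -/
import Mathlib

section
/- Stability of the local paths in k: if the endpoint of the path γ_k^{(x,n)} is open, i.e. ω(γ_k(k)) = 1, then the first k steps of γ_{k+1}^{(x,n)} coincide with γ_k^{(x,n)}. -/
/-- A space-time site of `ℤ^d × ℤ`. -/
abbrev Site (d : ℕ) := (Fin d → ℤ) × ℤ

/-- The neighbourhood `U(x,n) = {(y,n+1) : ‖x − y‖_∞ ≤ 1}` of a site in the next generation. -/
def nbhd {d : ℕ} (p : Site d) : Set (Site d) :=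
  {q | q.2 = p.2 + 1 ∧ ∀ i, |p.1 i - q.1 i| ≤ 1}

/-- There is a directed open path of length `k` starting at `p` (all `k+1` sites on it open). -/
def hasOpenPath {d : ℕ} (ω : Site d → Bool) (p : Site d) (k : ℕ) : Prop :=
  ∃ γ : ℕ → (Fin d → ℤ), γ 0 = p.1 ∧
    (∀ j < k, ∀ i, |γ (j + 1) i - γ j i| ≤ 1) ∧
    (∀ j ≤ k, ω (γ j, p.2 + (j : ℤ)) = true)

/-- `ellSucc ω p` is `ℓ(p) + 1`, where `ℓ(p)` is the length of the longest directed open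
path starting at `p` (with `ℓ(p) = −1`, i.e. `ellSucc ω p = 0`, at closed sites, and
`ℓ(p) = ∞` on the backbone).  Shifting by one lets us work in `ℕ∞` instead of `{−1} ∪ ℕ∞`. -/
noncomputable def ellSucc {d : ℕ} (ω : Site d → Bool) (p : Site d) : ℕ∞ :=
  sSup {t : ℕ∞ | ∃ k : ℕ, t = (k : ℕ∞) + 1 ∧ hasOpenPath ω p k}

/-- The backbone `C` of the oriented percolation cluster: sites where `ℓ = ∞`. -/
def backbone {d : ℕ} (ω : Site d → Bool) : Set (Site d) := {p | ellSucc ω p = ⊤}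

/-- `maximizers ω (k+1) p` is the set `M_k(p)` of maximisers over `U(p)` of the truncated
length `ℓ_k = ℓ ∧ k` (in the shifted encoding: of `min (ℓ + 1) (k + 1)`), and
`maximizers ω 0 p = M_{−1}(p) = U(p)`. -/
noncomputable def maximizers {d : ℕ} (ω : Site d → Bool) : ℕ → Site d → Set (Site d)
  | 0, p => nbhd p
  | k + 1, p =>
      {q ∈ nbhd p |
        min (ellSucc ω q) ((k : ℕ∞) + 1) =
          sSup ((fun r => min (ellSucc ω r) ((k : ℕ∞) + 1)) '' nbhd p)}

/-- `sel` is a valid local-selection rule for the random permutations encoded by the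
rank function `rank`: `rank p` enumerates the neighbourhood `U(p)` injectively (this is
the permutation `ω̃(p)`), and `sel k p` is the element of `maximizers ω k p`
(i.e. of `M_{k-1}(p)`, with `sel 0 p ∈ M_{−1}(p) = U(p)`) appearing first in this
permutation. -/
def IsSelection {d : ℕ} (ω : Site d → Bool) (rank : Site d → Site d → ℕ)
    (sel : ℕ → Site d → Site d) : Prop :=
  (∀ p : Site d, Set.InjOn (rank p) (nbhd p)) ∧
    ∀ (k : ℕ) (p : Site d),
      sel k p ∈ maximizers ω k p ∧ ∀ q ∈ maximizers ω k p, rank p (sel k p) ≤ rank p q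

/-- The locally constructed path `γ_k^{(x,n)}` of length `k` started at `p = (x,n)`:
`γ_k(0) = p` and `γ_k(j+1) = m_{k−j−2}(γ_k(j))`, where `m_i` is the first element of
`M_i` in the permutation (in the shifted indexing, `γ_k(j+1) = sel (k−j−1) (γ_k(j))`). -/
def gammaPath {d : ℕ} (sel : ℕ → Site d → Site d) (p : Site d) (k : ℕ) : ℕ → Site d
  | 0 => p
  | j + 1 => sel (k - j - 1) (gammaPath sel p k j)

section Aux
variable {d : ℕ} {ω : Site d → Bool}

lemma le_ellSucc_of_path {p : Site d} {k : ℕ} (h : hasOpenPath ω p k) :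
    (k : ℕ∞) + 1 ≤ ellSucc ω p := le_sSup ⟨k, rfl, h⟩

lemma ellSucc_pos {p : Site d} (hp : ω p = true) : 1 ≤ ellSucc ω p := by
  have h : hasOpenPath ω p 0 := by
    refine ⟨fun _ => p.1, rfl, by omega, ?_⟩
    intro j hj
    have : j = 0 := Nat.le_zero.mp hj
    subst this
    simpa using hp
  simpa using le_ellSucc_of_path h

lemma ellSucc_eq_zero {p : Site d} (hp : ω p = false) : ellSucc ω p = 0 := by
  refine le_antisymm ?_ zero_le
  refine sSup_le ?_
  rintro t ⟨k, rfl, γ, h0, _, ho⟩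
  exfalso
  have := ho 0 (Nat.zero_le k)
  rw [h0] at this
  simp only [Nat.cast_zero, add_zero, Prod.mk.eta] at this
  rw [hp] at this
  exact Bool.false_ne_true this

lemma hasOpenPath_cons {p r : Site d} {k : ℕ} (hp : ω p = true) (hr : r ∈ nbhd p)
    (h : hasOpenPath ω r k) : hasOpenPath ω p (k + 1) := by
  obtain ⟨γ, h0, hs, ho⟩ := h
  refine ⟨fun j => match j with | 0 => p.1 | j + 1 => γ j, rfl, ?_, ?_⟩
  · intro j hj i
    match j with
    | 0 =>
      show |γ 0 i - p.1 i| ≤ 1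
      rw [h0, abs_sub_comm]
      exact hr.2 i
    | j + 1 => exact hs j (by omega) i
  · intro j hj
    match j with
    | 0 => simpa using hp
    | j + 1 =>
      have hthis := ho j (by omega)
      show ω (γ j, p.2 + ((j + 1 : ℕ) : ℤ)) = true
      have heq : p.2 + ((j + 1 : ℕ) : ℤ) = r.2 + (j : ℤ) := by rw [hr.1]; push_cast; ring
      rw [heq]
      exact hthis

lemma hasOpenPath_tail {p : Site d} {k : ℕ} (h : hasOpenPath ω p (k + 1)) :
    ∃ r ∈ nbhd p, hasOpenPath ω r k := by
  obtain ⟨γ, h0, hs, ho⟩ := h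
  refine ⟨(γ 1, p.2 + 1), ⟨rfl, fun i => ?_⟩, fun j => γ (j + 1), rfl, ?_, ?_⟩
  · rw [← h0, abs_sub_comm]
    exact hs 0 (by omega) i
  · intro j hj i
    exact hs (j + 1) (by omega) i
  · intro j hj
    have hthis := ho (j + 1) (by omega)
    show ω (γ (j + 1), (p.2 + 1) + (j : ℤ)) = true
    have heq : (p.2 + 1) + (j : ℤ) = p.2 + ((j + 1 : ℕ) : ℤ) := by push_cast; ring
    rw [heq]
    exact hthis

lemma exists_path_of_le {p : Site d} {m : ℕ} (h : (m : ℕ∞) + 1 ≤ ellSucc ω p) :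
    ∃ k, m ≤ k ∧ hasOpenPath ω p k := by
  by_contra hc
  push_neg at hc
  have hle : ellSucc ω p ≤ (m : ℕ∞) := by
    refine sSup_le ?_
    rintro t ⟨k, rfl, hk⟩
    have hkm : k < m := by
      by_contra hkm
      exact hc k (by omega) hk
    exact_mod_cast Nat.succ_le_of_lt hkm
  have h2 : m + 1 ≤ m := by exact_mod_cast le_trans h hle
  omega

lemma ellSucc_ge {p r : Site d} (m : ℕ) (hp : ω p = true) (hr : r ∈ nbhd p)
    (h : (m : ℕ∞) ≤ ellSucc ω r) : ((m + 1 : ℕ) : ℕ∞) ≤ ellSucc ω p := by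
  match m with
  | 0 => simpa using ellSucc_pos hp
  | n + 1 =>
    have h' : (n : ℕ∞) + 1 ≤ ellSucc ω r := by
      refine le_trans (le_of_eq ?_) h
      push_cast; ring
    obtain ⟨k, hk, hpath⟩ := exists_path_of_le h'
    have h2 := le_ellSucc_of_path (hasOpenPath_cons hp hr hpath)
    refine le_trans ?_ h2
    have : ((n + 1 + 1 : ℕ) : ℕ∞) ≤ ((k + 1 : ℕ) : ℕ∞) + 1 := by
      have : ((n + 1 + 1 : ℕ) : ℕ∞) ≤ ((k + 1 + 1 : ℕ) : ℕ∞) := by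
        exact_mod_cast (by omega : n + 1 + 1 ≤ k + 1 + 1)
      refine le_trans this (le_of_eq ?_)
      push_cast; ring
    exact this

lemma ellSucc_le {p : Site d} (m : ℕ) (hm : 1 ≤ m)
    (h : ∀ r ∈ nbhd p, ellSucc ω r < (m : ℕ∞)) : ellSucc ω p ≤ (m : ℕ∞) := by
  refine sSup_le ?_
  rintro t ⟨k, rfl, hk⟩
  match k with
  | 0 =>
    have : ((1 : ℕ) : ℕ∞) ≤ (m : ℕ∞) := by exact_mod_cast hm
    simpa using this
  | k + 1 =>
    obtain ⟨r, hr, hpath⟩ := hasOpenPath_tail hk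
    have h1 : (k : ℕ∞) + 1 ≤ ellSucc ω r := le_ellSucc_of_path hpath
    have h2 : (k : ℕ∞) + 1 < (m : ℕ∞) := lt_of_le_of_lt h1 (h r hr)
    have h3 : ((k + 1 : ℕ) : ℕ∞) < (m : ℕ∞) := by push_cast; exact h2
    have h4 : k + 1 < m := by exact_mod_cast h3
    have : ((k + 1 + 1 : ℕ) : ℕ∞) ≤ (m : ℕ∞) := by exact_mod_cast (by omega : k + 1 + 1 ≤ m)
    refine le_trans (le_of_eq ?_) this
    push_cast; ring

lemma maximizers_subset_nbhd (m : ℕ) (p : Site d) : maximizers ω m p ⊆ nbhd p := by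
  match m with
  | 0 => exact fun q hq => hq
  | n + 1 => exact fun q hq => hq.1

lemma mem_maximizers_iff (m : ℕ) (p q : Site d) :
    q ∈ maximizers ω (m + 1) p ↔ q ∈ nbhd p ∧ ∀ r ∈ nbhd p,
      min (ellSucc ω r) ((m : ℕ∞) + 1) ≤ min (ellSucc ω q) ((m : ℕ∞) + 1) := by
  constructor
  · rintro ⟨hq, hmax⟩
    refine ⟨hq, fun r hr => ?_⟩
    rw [hmax]
    exact le_sSup ⟨r, hr, rfl⟩
  · rintro ⟨hq, h⟩
    refine ⟨hq, le_antisymm (le_sSup ⟨q, hq, rfl⟩) ?_⟩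
    refine sSup_le ?_
    rintro t ⟨r, hr, rfl⟩
    exact h r hr

lemma maximizers_succ_subset (m : ℕ) (p : Site d) :
    maximizers ω (m + 1) p ⊆ maximizers ω m p := by
  match m with
  | 0 => exact fun q hq => hq.1
  | n + 1 =>
    intro q hq
    rw [mem_maximizers_iff] at hq ⊢
    obtain ⟨hq1, hq2⟩ := hq
    refine ⟨hq1, fun r hr => ?_⟩
    have h2 := hq2 r hr
    have hle : (n : ℕ∞) + 1 ≤ ((n + 1 : ℕ) : ℕ∞) + 1 := by
      push_cast
      exact add_le_add_left (le_self_add) 1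
    have key : ∀ a : ℕ∞, min a ((n : ℕ∞) + 1)
        = min (min a (((n + 1 : ℕ) : ℕ∞) + 1)) ((n : ℕ∞) + 1) := fun a => by
      rw [min_assoc, min_eq_right hle]
    rw [key (ellSucc ω r), key (ellSucc ω q)]
    exact min_le_min h2 le_rfl

end Aux

section Main
variable {d : ℕ} {ω : Site d → Bool} {rank : Site d → Site d → ℕ} {sel : ℕ → Site d → Site d}

lemma sel_succ_eq (hsel : IsSelection ω rank sel) (m : ℕ) (p : Site d)
    (h : sel m p ∈ maximizers ω (m + 1) p) : sel (m + 1) p = sel m p := by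
  obtain ⟨hinj, hmin⟩ := hsel
  have h1 := hmin (m + 1) p
  have h2 := hmin m p
  have ha : sel (m + 1) p ∈ maximizers ω m p := maximizers_succ_subset m p h1.1
  have e1 : rank p (sel (m + 1) p) ≤ rank p (sel m p) := h1.2 _ h
  have e2 : rank p (sel m p) ≤ rank p (sel (m + 1) p) := h2.2 _ ha
  exact hinj p (maximizers_subset_nbhd (m + 1) p h1.1) (maximizers_subset_nbhd m p h2.1)
    (le_antisymm e1 e2)

end Main

/-- Stability in `k`: if the endpoint of `γ_k^{(x,n)}` is open, i.e. `ω(γ_k(k)) = 1`,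
then the path `γ_{k+1}^{(x,n)}` restricted to its first `k` steps equals `γ_k^{(x,n)}`. -/
theorem gammaPath_stable (d : ℕ) (ω : Site d → Bool) (rank : Site d → Site d → ℕ)
    (sel : ℕ → Site d → Site d) (hsel : IsSelection ω rank sel)
    (p : Site d) (k : ℕ) (hopen : ω (gammaPath sel p k k) = true) :
    ∀ j ≤ k, gammaPath sel p (k + 1) j = gammaPath sel p k j := by
  have hmem : ∀ j, gammaPath sel p k (j + 1) ∈ maximizers ω (k - j - 1) (gammaPath sel p k j) :=
    fun j => (hsel.2 (k - j - 1) (gammaPath sel p k j)).1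
  -- the key invariant, proved by downward induction on j
  have hP : ∀ i j, j ≤ k - 1 → k - 1 - j = i →
      (((k - j : ℕ)) : ℕ∞) ≤ ellSucc ω (gammaPath sel p k (j + 1)) ∨
        ∀ r ∈ nbhd (gammaPath sel p k j), ellSucc ω r < ((k - j - 1 : ℕ) : ℕ∞) := by
    intro i
    induction i with
    | zero =>
      intro j hj hij
      left
      rcases Nat.eq_zero_or_pos k with hk0 | hk1
      · subst hk0; simp
      · have hjk : j + 1 = k := by omega
        have h1 := ellSucc_pos (ω := ω) (p := gammaPath sel p k k) hopen
        rw [hjk, show k - j = 1 by omega]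
        exact_mod_cast h1
    | succ i ih =>
      intro j hj hij
      have hP1 := ih (j + 1) (by omega) (by omega)
      have hA := hmem j
      have hB := hmem (j + 1)
      have hnb : gammaPath sel p k (j + 2) ∈ nbhd (gammaPath sel p k (j + 1)) :=
        maximizers_subset_nbhd _ _ hB
      have hk1 : k - j - 1 = (k - j - 2) + 1 := by omega
      by_cases hω : ω (gammaPath sel p k (j + 1)) = true
      · rcases hP1 with hL | hR
        · left
          have := ellSucc_ge (k - (j + 1)) hω hnb hL
          rwa [show k - (j + 1) + 1 = k - j by omega] at this
        · rcases Nat.eq_zero_or_pos (k - (j + 1) - 1) with h0 | h1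
          · exfalso
            have := hR _ hnb
            rw [h0] at this
            simp at this
          · right
            have hub : ellSucc ω (gammaPath sel p k (j + 1)) ≤ ((k - (j + 1) - 1 : ℕ) : ℕ∞) :=
              ellSucc_le _ h1 hR
            have hub' : ellSucc ω (gammaPath sel p k (j + 1)) ≤ ((k - j - 2 : ℕ) : ℕ∞) := by
              rwa [show k - (j + 1) - 1 = k - j - 2 by omega] at hub
            intro r hr
            rw [hk1, mem_maximizers_iff] at hA
            have h2 := hA.2 r hr
            have hTeq : ((k - j - 2 : ℕ) : ℕ∞) + 1 = ((k - j - 1 : ℕ) : ℕ∞) := by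
              rw [hk1]; push_cast; ring
            have h3 : min (ellSucc ω r) (((k - j - 2 : ℕ) : ℕ∞) + 1) ≤ ((k - j - 2 : ℕ) : ℕ∞) :=
              le_trans h2 (le_trans (min_le_left _ _) hub')
            rcases lt_or_ge (ellSucc ω r) (((k - j - 2 : ℕ) : ℕ∞) + 1) with h4 | h4
            · rwa [hTeq] at h4
            · exfalso
              rw [min_eq_right h4, hTeq] at h3
              have : k - j - 1 ≤ k - j - 2 := by exact_mod_cast h3
              omega
      · right
        have hz : ellSucc ω (gammaPath sel p k (j + 1)) = 0 :=
          ellSucc_eq_zero (by simpa using hω)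
        intro r hr
        rw [hk1, mem_maximizers_iff] at hA
        have h2 := hA.2 r hr
        rw [hz] at h2
        have h3 : min (ellSucc ω r) (((k - j - 2 : ℕ) : ℕ∞) + 1) ≤ 0 := by
          simpa using h2
        rcases min_le_iff.mp h3 with h4 | h4
        · have h5 : ellSucc ω r = 0 := nonpos_iff_eq_zero.mp h4
          rw [h5]
          have : (0 : ℕ) < k - j - 1 := by omega
          exact_mod_cast this
        · exfalso
          simp at h4
  -- upgrade: γ_k(j+1) is also a maximizer at truncation level k - j
  have hD : ∀ j, j + 1 ≤ k →
      gammaPath sel p k (j + 1) ∈ maximizers ω (k - j) (gammaPath sel p k j) := by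
    intro j hj
    have hP' := hP (k - 1 - j) j (by omega) rfl
    have hk2 : k - j = (k - j - 1) + 1 := by omega
    have hnb : gammaPath sel p k (j + 1) ∈ nbhd (gammaPath sel p k j) :=
      maximizers_subset_nbhd _ _ (hmem j)
    rw [hk2, mem_maximizers_iff]
    refine ⟨hnb, ?_⟩
    have hTeq : ((k - j - 1 : ℕ) : ℕ∞) + 1 = ((k - j : ℕ) : ℕ∞) := by
      rw [hk2]; push_cast; ring
    rcases hP' with hL | hR
    · intro r hr
      rw [hTeq, min_eq_right hL]
      exact min_le_right _ _
    · rcases Nat.eq_zero_or_pos (k - j - 1) with h0 | h1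
      · exfalso
        have := hR _ hnb
        rw [h0] at this
        simp at this
      · intro r hr
        have hk3 : k - j - 1 = (k - j - 2) + 1 := by omega
        have hA := hmem j
        rw [hk3, mem_maximizers_iff] at hA
        have h2 := hA.2 r hr
        have hTeq2 : ((k - j - 2 : ℕ) : ℕ∞) + 1 = ((k - j - 1 : ℕ) : ℕ∞) := by
          rw [hk3]; push_cast; ring
        rw [hTeq2] at h2
        have hr' := hR r hr
        have ha' := hR _ hnb
        rw [min_eq_left (le_of_lt hr'), min_eq_left (le_of_lt ha')] at h2
        exact min_le_min h2 le_rfl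
  -- conclusion by induction on j
  intro j
  induction j with
  | zero => intro _; rfl
  | succ j ih =>
    intro hj
    have ihj := ih (by omega)
    show sel (k + 1 - j - 1) (gammaPath sel p (k + 1) j) = gammaPath sel p k (j + 1)
    rw [ihj, show k + 1 - j - 1 = (k - j - 1) + 1 by omega]
    rw [sel_succ_eq hsel _ _ ?_]
    · rfl
    · have hDj := hD j hj
      rwa [show k - j = (k - j - 1) + 1 by omega] at hDj
end

section
/- Exploration of finite branches: if γ_k(k−1) ∈ C and γ_k(k) ∉ C for some k, then γ_j(k) = γ_k(k) for all k ≤ j ≤ k + ℓ(γ_k(k)) + 1, and γ_{k + ℓ(γ_k(k)) + 2}(k) ≠ γ_k(k). -/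
section Aux

variable {d : ℕ} {ω : Site d → Bool} {p r q b : Site d} {k m s t : ℕ}

lemma hop_mono (h : hasOpenPath ω p k) (hm : m ≤ k) : hasOpenPath ω p m := by
  obtain ⟨γ, h0, h1, h2⟩ := h
  exact ⟨γ, h0, fun j hj i => h1 j (lt_of_lt_of_le hj hm) i,
    fun j hj => h2 j (le_trans hj hm)⟩

lemma le_ellSucc_iff : (k : ℕ∞) + 1 ≤ ellSucc ω p ↔ hasOpenPath ω p k := by
  constructor
  · intro h
    by_contra hc
    have hub : ellSucc ω p ≤ (k : ℕ∞) := by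
      apply sSup_le
      rintro t ⟨m, rfl, hm⟩
      have hmk : m < k := by
        by_contra hmk
        exact hc (hop_mono hm (le_of_not_gt hmk))
      have : (m : ℕ∞) + 1 ≤ (k : ℕ∞) := by
        have : ((m + 1 : ℕ) : ℕ∞) ≤ (k : ℕ∞) := by exact_mod_cast hmk
        simpa using this
      exact this
    have h2 : (k : ℕ∞) + 1 ≤ (k : ℕ∞) := le_trans h hub
    rw [← Nat.cast_one, ← Nat.cast_add, Nat.cast_le] at h2
    omega
  · intro h
    exact le_sSup ⟨k, rfl, h⟩

lemma omega_of_one_le (h : 1 ≤ ellSucc ω p) : ω p = true := by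
  have : hasOpenPath ω p 0 := by
    rw [← le_ellSucc_iff]; simpa using h
  obtain ⟨γ, h0, _, h2⟩ := this
  have := h2 0 le_rfl
  rw [h0] at this
  simpa using this

lemma hop_zero (h : ω p = true) : hasOpenPath ω p 0 :=
  ⟨fun _ => p.1, rfl, by simp, by simpa using h⟩

lemma hop_prepend (hr : r ∈ nbhd p) (hω : ω p = true) (h : hasOpenPath ω r m) :
    hasOpenPath ω p (m + 1) := by
  obtain ⟨γ, h0, h1, h2⟩ := h
  obtain ⟨hr2, hr1⟩ := hr
  refine ⟨fun j => if j = 0 then p.1 else γ (j - 1), by simp, ?_, ?_⟩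
  · intro j hj i
    cases j with
    | zero => simpa [h0] using (abs_sub_comm (p.1 i) (r.1 i) ▸ hr1 i)
    | succ j => simpa using h1 j (by omega) i
  · intro j hj
    cases j with
    | zero => simpa using hω
    | succ j =>
      have := h2 j (by omega)
      have hz : r.2 + (j : ℤ) = p.2 + ((j + 1 : ℕ) : ℤ) := by
        rw [hr2]; push_cast; ring
      simpa [hz] using this

lemma hop_extract (h : hasOpenPath ω p (m + 1)) :
    ∃ r ∈ nbhd p, hasOpenPath ω r m := by
  obtain ⟨γ, h0, h1, h2⟩ := h
  refine ⟨(γ 1, p.2 + 1), ⟨rfl, fun i => ?_⟩, ⟨fun j => γ (j + 1), rfl, ?_, ?_⟩⟩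
  · have := h1 0 (by omega) i
    rw [h0] at this
    simpa [abs_sub_comm] using this
  · intro j hj i
    exact h1 (j + 1) (by omega) i
  · intro j hj
    have := h2 (j + 1) (by omega)
    have hz : p.2 + 1 + (j : ℤ) = p.2 + ((j + 1 : ℕ) : ℤ) := by push_cast; ring
    simpa [hz] using this

lemma enat_eq_top {x : ℕ∞} (h : ∀ n : ℕ, (n : ℕ∞) ≤ x) : x = ⊤ := by
  by_contra hx
  lift x to ℕ using hx
  have h2 := h (x + 1)
  rw [Nat.cast_le] at h2
  omega

lemma enat_add_one_le {x y : ℕ∞} (h : ∀ n : ℕ, (n : ℕ∞) ≤ x → (n : ℕ∞) + 1 ≤ y) :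
    x + 1 ≤ y := by
  cases x with
  | top =>
    have : y = ⊤ := by
      apply enat_eq_top
      intro n
      exact le_trans (by rw [← Nat.cast_one, ← Nat.cast_add, Nat.cast_le]; omega)
        (h n le_top)
    simp [this]
  | coe n => exact h n le_rfl

lemma step_le (hω : ω p = true) (hr : r ∈ nbhd p) :
    ellSucc ω r + 1 ≤ ellSucc ω p := by
  apply enat_add_one_le
  intro n hn
  cases n with
  | zero =>
    simpa using le_ellSucc_iff.2 (hop_zero hω)
  | succ m =>
    have hm : hasOpenPath ω r m := by
      rw [← le_ellSucc_iff]
      refine le_trans (le_of_eq ?_) hn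
      push_cast; ring
    have := le_ellSucc_iff.2 (hop_prepend hr hω hm)
    refine le_trans (le_of_eq ?_) this
    push_cast; ring

lemma nbhd_finite (p : Site d) : (nbhd p).Finite := by
  have h1 : (Set.pi Set.univ (fun i => Set.Icc (p.1 i - 1) (p.1 i + 1))).Finite :=
    Set.Finite.pi (fun i => Set.finite_Icc _ _)
  have h2 : ((Set.pi Set.univ (fun i => Set.Icc (p.1 i - 1) (p.1 i + 1))) ×ˢ
      ({p.2 + 1} : Set ℤ)).Finite := h1.prod (Set.finite_singleton _)
  refine h2.subset ?_
  rintro q ⟨hq2, hq1⟩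
  refine ⟨fun i _ => ?_, hq2⟩
  have := hq1 i
  rw [abs_le] at this
  constructor <;> [linarith [this.2]; linarith [this.1]]

lemma ellSucc_top_iff : ellSucc ω p = ⊤ ↔ ∀ n, hasOpenPath ω p n := by
  constructor
  · intro h n
    rw [← le_ellSucc_iff, h]; exact le_top
  · intro h
    apply enat_eq_top
    intro n
    exact le_trans (self_le_add_right _ 1) (le_ellSucc_iff.2 (h n))

lemma exists_top_nbhd (h : ellSucc ω p = ⊤) : ∃ b ∈ nbhd p, ellSucc ω b = ⊤ := by
  have hall := ellSucc_top_iff.1 h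
  obtain ⟨r0, hr0, -⟩ := hop_extract (hall 1)
  set S : Set ℕ∞ := ellSucc ω '' nbhd p with hS
  have hSfin : S.Finite := (nbhd_finite p).image _
  have hSne : S.Nonempty := ⟨_, r0, hr0, rfl⟩
  have hmem : sSup S ∈ S := hSne.csSup_mem hSfin
  obtain ⟨b, hb, hbe⟩ := hmem
  refine ⟨b, hb, ?_⟩
  rw [hbe]
  by_contra hbt
  lift sSup S to ℕ using hbt with N hN
  obtain ⟨r, hr, hrp⟩ := hop_extract (hall (N + 1))
  have h1 : ((N : ℕ∞) + 1) ≤ ellSucc ω r := le_ellSucc_iff.2 hrp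
  have h2 : ellSucc ω r ≤ sSup S := le_sSup ⟨r, hr, rfl⟩
  rw [← hN] at h2
  have h3 : (N : ℕ∞) + 1 ≤ (N : ℕ∞) := le_trans h1 h2
  rw [← Nat.cast_one, ← Nat.cast_add, Nat.cast_le] at h3
  omega

variable {rank : Site d → Site d → ℕ} {sel : ℕ → Site d → Site d}

lemma maximizers_subset (ω : Site d → Bool) (k : ℕ) (p : Site d) :
    maximizers ω k p ⊆ nbhd p := by
  cases k with
  | zero => exact subset_rfl
  | succ k => exact Set.sep_subset _ _

lemma sel_eq (hsel : IsSelection ω rank sel) (hb : b ∈ maximizers ω k p)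
    (hmin : rank p b ≤ rank p (sel k p)) : sel k p = b :=
  hsel.1 p (maximizers_subset ω k p (hsel.2 k p).1) (maximizers_subset ω k p hb)
    (le_antisymm ((hsel.2 k p).2 b hb) hmin)

lemma maximizers_top_eq (hb : b ∈ nbhd p) (hbt : ellSucc ω b = ⊤) (s : ℕ) :
    maximizers ω (s + 1) p = {x ∈ nbhd p | (s : ℕ∞) + 1 ≤ ellSucc ω x} := by
  have hsup : sSup ((fun r => min (ellSucc ω r) ((s : ℕ∞) + 1)) '' nbhd p)
      = (s : ℕ∞) + 1 := by
    apply le_antisymm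
    · apply sSup_le; rintro u ⟨x, _, rfl⟩; exact min_le_right _ _
    · refine le_sSup ⟨b, hb, ?_⟩; simp only []; rw [hbt]; simp
  show {x ∈ nbhd p | min (ellSucc ω x) ((s : ℕ∞) + 1) = _} = _
  rw [hsup]
  ext x
  simp only [Set.mem_sep_iff, Set.mem_setOf_eq, min_eq_right_iff]

lemma sel_stable_top (hsel : IsSelection ω rank sel) (ht : 1 ≤ t)
    (htop : ellSucc ω (sel t q) = ⊤) (hs : t ≤ s) : sel s q = sel t q := by
  obtain ⟨t', rfl⟩ : ∃ t', t = t' + 1 := ⟨t - 1, by omega⟩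
  obtain ⟨s', rfl⟩ : ∃ s', s = s' + 1 := ⟨s - 1, by omega⟩
  have hrn : sel (t' + 1) q ∈ nbhd q := maximizers_subset ω _ q (hsel.2 _ q).1
  have hmt := maximizers_top_eq (ω := ω) hrn htop t'
  have hms := maximizers_top_eq (ω := ω) hrn htop s'
  have hrb : sel (t' + 1) q ∈ maximizers ω (s' + 1) q := by
    rw [hms]; exact ⟨hrn, by rw [htop]; exact le_top⟩
  have hsub : maximizers ω (s' + 1) q ⊆ maximizers ω (t' + 1) q := by
    rw [hms, hmt]
    rintro x ⟨hx1, hx2⟩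
    refine ⟨hx1, le_trans ?_ hx2⟩
    have : (t' : ℕ∞) + 1 ≤ (s' : ℕ∞) + 1 := by
      rw [← Nat.cast_one, ← Nat.cast_add, ← Nat.cast_add, Nat.cast_le]; omega
    exact this
  exact sel_eq hsel hrb ((hsel.2 (t' + 1) q).2 _ (hsub (hsel.2 (s' + 1) q).1))

lemma sel_stable_fin (hsel : IsSelection ω rank sel) {N : ℕ}
    (hN : ellSucc ω (sel t q) = (N : ℕ∞)) (hNt : N + 1 ≤ t) (hs : t ≤ s) :
    sel s q = sel t q := by
  obtain ⟨t', rfl⟩ : ∃ t', t = t' + 1 := ⟨t - 1, by omega⟩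
  obtain ⟨s', rfl⟩ : ∃ s', s = s' + 1 := ⟨s - 1, by omega⟩
  have hrm := (hsel.2 (t' + 1) q).1
  obtain ⟨hrn, hreq⟩ := hrm
  have hNlt : (N : ℕ∞) < (t' : ℕ∞) + 1 := by
    rw [← Nat.cast_one, ← Nat.cast_add, Nat.cast_lt]; omega
  have hsupN : sSup ((fun r => min (ellSucc ω r) ((t' : ℕ∞) + 1)) '' nbhd q)
      = (N : ℕ∞) := by
    rw [← hreq, hN, min_eq_left hNlt.le]
  have hub : ∀ x ∈ nbhd q, ellSucc ω x ≤ (N : ℕ∞) := by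
    intro x hx
    have h1 : min (ellSucc ω x) ((t' : ℕ∞) + 1) ≤ (N : ℕ∞) := by
      rw [← hsupN]; exact le_sSup ⟨x, hx, rfl⟩
    rcases min_le_iff.1 h1 with h | h
    · exact h
    · exact absurd h (not_le_of_gt hNlt)
  have hcong : ∀ x ∈ nbhd q,
      min (ellSucc ω x) ((s' : ℕ∞) + 1) = min (ellSucc ω x) ((t' : ℕ∞) + 1) := by
    intro x hx
    have h1 : ellSucc ω x ≤ (t' : ℕ∞) + 1 := le_trans (hub x hx) hNlt.le
    have h2 : ellSucc ω x ≤ (s' : ℕ∞) + 1 := by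
      refine le_trans h1 ?_
      rw [← Nat.cast_one, ← Nat.cast_add, ← Nat.cast_add, Nat.cast_le]; omega
    rw [min_eq_left h1, min_eq_left h2]
  have hset : maximizers ω (s' + 1) q = maximizers ω (t' + 1) q := by
    show {x ∈ nbhd q | min (ellSucc ω x) ((s' : ℕ∞) + 1) = _}
      = {x ∈ nbhd q | min (ellSucc ω x) ((t' : ℕ∞) + 1) = _}
    have himg : (fun r => min (ellSucc ω r) ((s' : ℕ∞) + 1)) '' nbhd q
        = (fun r => min (ellSucc ω r) ((t' : ℕ∞) + 1)) '' nbhd q :=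
      Set.image_congr hcong
    rw [himg]
    ext x
    simp only [Set.mem_sep_iff]
    constructor
    · rintro ⟨hx1, hx2⟩; exact ⟨hx1, by rw [← hcong x hx1]; exact hx2⟩
    · rintro ⟨hx1, hx2⟩; exact ⟨hx1, by rw [hcong x hx1]; exact hx2⟩
  have hb : sel (t' + 1) q ∈ maximizers ω (s' + 1) q := by
    rw [hset]; exact (hsel.2 (t' + 1) q).1
  refine sel_eq hsel hb ((hsel.2 (t' + 1) q).2 _ ?_)
  rw [← hset]; exact (hsel.2 (s' + 1) q).1

lemma backbone_sel (hsel : IsSelection ω rank sel) (hq : ellSucc ω q = ⊤) (L : ℕ)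
    (hm : ellSucc ω (sel 0 q) = (L : ℕ∞)) :
    (∀ s ≤ L, sel s q = sel 0 q) ∧ sel (L + 1) q ≠ sel 0 q := by
  obtain ⟨b, hb, hbt⟩ := exists_top_nbhd hq
  have hm0 : sel 0 q ∈ nbhd q := (hsel.2 0 q).1
  constructor
  · intro s hsL
    cases s with
    | zero => rfl
    | succ s' =>
      have hmt := maximizers_top_eq (ω := ω) hb hbt s'
      have hmem : sel 0 q ∈ maximizers ω (s' + 1) q := by
        rw [hmt]
        refine ⟨hm0, ?_⟩
        rw [hm, ← Nat.cast_one, ← Nat.cast_add, Nat.cast_le]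
        omega
      exact sel_eq hsel hmem
        ((hsel.2 0 q).2 _ (maximizers_subset ω _ q (hsel.2 (s' + 1) q).1))
  · intro hcontra
    have hmem := (hsel.2 (L + 1) q).1
    rw [maximizers_top_eq (ω := ω) hb hbt L, hcontra] at hmem
    have := hmem.2
    rw [hm, ← Nat.cast_one, ← Nat.cast_add, Nat.cast_le] at this
    omega

end Aux

/-- Exploration of finite branches: if `γ_k(k−1) ∈ C` and `γ_k(k) ∉ C` for some `k ≥ 1`,
then `γ_j(k) = γ_k(k)` for all `k ≤ j ≤ k + ℓ(γ_k(k)) + 1`, and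
`γ_{k+ℓ(γ_k(k))+2}(k) ≠ γ_k(k)`.  Here `L = ℓ(γ_k(k)) + 1` in the shifted encoding
`ellSucc = ℓ + 1`, so the two conclusions read `j ≤ k + L` and `γ_{k+L+1}(k) ≠ γ_k(k)`. -/
theorem gammaPath_explores_finite_branch (d : ℕ) (ω : Site d → Bool)
    (rank : Site d → Site d → ℕ) (sel : ℕ → Site d → Site d)
    (hsel : IsSelection ω rank sel) (p : Site d) (k : ℕ) (hk : 1 ≤ k)
    (hin : gammaPath sel p k (k - 1) ∈ backbone ω)
    (hout : gammaPath sel p k k ∉ backbone ω)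
    (L : ℕ) (hL : ellSucc ω (gammaPath sel p k k) = (L : ℕ∞)) :
    (∀ j, k ≤ j → j ≤ k + L → gammaPath sel p j k = gammaPath sel p k k) ∧
      gammaPath sel p (k + L + 1) k ≠ gammaPath sel p k k := by
  set A := gammaPath sel p k with hA
  have hinC : ellSucc ω (A (k - 1)) = ⊤ := hin
  -- Claim G/F: if the path at time `j ≤ k-1` has finite `ellSucc` at least `k-1-j`,
  -- then the same holds at `j+1`, and at time `k-1` this contradicts `hin`.
  have hPhi : ∀ n j, j + n = k - 1 → ellSucc ω (A j) ≠ ⊤ →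
      ((k - 1 - j : ℕ) : ℕ∞) ≤ ellSucc ω (A j) → False := by
    intro n
    induction n with
    | zero =>
      intro j hj hne _
      have hjk : j = k - 1 := by omega
      rw [hjk] at hne
      exact hne hinC
    | succ n ih =>
      intro j hj hne hge
      lift ellSucc ω (A j) to ℕ using hne with M hM
      have hMc : k - 1 - j ≤ M := by
        rw [Nat.cast_le] at hge; exact hge
      have hc1 : 1 ≤ k - 1 - j := by omega
      have hopen : ω (A j) = true := by
        apply omega_of_one_le
        rw [← hM, ← Nat.cast_one, Nat.cast_le]
        omega
      have hstep : ∀ x ∈ nbhd (A j), ellSucc ω x + 1 ≤ (M : ℕ∞) := by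
        intro x hx
        rw [hM]
        exact step_le hopen hx
      have hdef : A (j + 1) = sel (k - j - 1) (A j) := rfl
      have hnext_nb : A (j + 1) ∈ nbhd (A j) := by
        rw [hdef]
        exact maximizers_subset ω _ _ (hsel.2 (k - j - 1) (A j)).1
      have hnext_fin : ellSucc ω (A (j + 1)) ≠ ⊤ := by
        intro htop
        have := hstep _ hnext_nb
        rw [htop, top_add, top_le_iff] at this
        exact (by simp : ((M : ℕ∞) ≠ ⊤)) this
      refine ih (j + 1) (by omega) hnext_fin ?_
      -- lower bound `k - 1 - (j+1) = n ≤ ellSucc (A (j+1))`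
      have hn : k - 1 - (j + 1) = n := by omega
      rw [hn]
      rcases Nat.eq_zero_or_pos n with hn0 | hn0
      · rw [hn0]; simp
      -- M ≥ k-1-j = n+1 ≥ 2
      have hM2 : 2 ≤ M := by omega
      have hpathM : hasOpenPath ω (A j) (M - 1) := by
        rw [← le_ellSucc_iff, ← hM]
        apply le_of_eq
        norm_cast
        omega
      obtain ⟨x0, hx0, hx0p⟩ : ∃ x0 ∈ nbhd (A j), hasOpenPath ω x0 (M - 2) := by
        have : M - 1 = (M - 2) + 1 := by omega
        rw [this] at hpathM
        exact hop_extract hpathM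
      have hx0l : ((M - 1 : ℕ) : ℕ∞) ≤ ellSucc ω x0 := by
        have := le_ellSucc_iff.2 hx0p
        refine le_trans (le_of_eq ?_) this
        norm_cast
        omega
      -- use that A (j+1) is a maximizer at level k - j - 1 = n + 1
      obtain ⟨t', ht'⟩ : ∃ t', k - j - 1 = t' + 1 := ⟨k - j - 2, by omega⟩
      have hmax := (hsel.2 (k - j - 1) (A j)).1
      rw [ht'] at hmax
      obtain ⟨-, hmaxeq⟩ := hmax
      have hlow : ((n : ℕ∞)) ≤
          sSup ((fun r => min (ellSucc ω r) ((t' : ℕ∞) + 1)) '' nbhd (A j)) := by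
        refine le_trans ?_ (le_sSup ⟨x0, hx0, rfl⟩)
        simp only []
        apply le_min
        · refine le_trans ?_ hx0l
          rw [Nat.cast_le]; omega
        · rw [← Nat.cast_one, ← Nat.cast_add, Nat.cast_le]; omega
      rw [← hmaxeq] at hlow
      have := le_trans hlow (min_le_left _ _)
      rw [hdef, ht']
      exact this
  -- Claim E : stability of the selection along the prefix of the path
  have hE : ∀ i, i + 1 ≤ k - 1 → ∀ s, k - i - 1 ≤ s → sel s (A i) = A (i + 1) := by
    intro i hi s hsi
    have hdef : A (i + 1) = sel (k - i - 1) (A i) := rfl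
    rcases eq_or_ne (ellSucc ω (A (i + 1))) ⊤ with htop | hfin
    · rw [hdef] at htop
      rw [sel_stable_top hsel (by omega) htop hsi, ← hdef]
    · lift ellSucc ω (A (i + 1)) to ℕ using hfin with N hN
      by_cases hcase : N + 1 ≤ k - i - 1
      · rw [hdef] at hN
        rw [sel_stable_fin hsel hN.symm hcase hsi, ← hdef]
      · exfalso
        refine hPhi (k - 1 - (i + 1)) (i + 1) (by omega) (by rw [← hN]; simp) ?_
        rw [← hN, Nat.cast_le]
        omega
  -- the paths agree on the prefix
  have hpre : ∀ j, k ≤ j → ∀ i, i ≤ k - 1 → gammaPath sel p j i = A i := by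
    intro j hj i
    induction i with
    | zero => intro _; rfl
    | succ i ih =>
      intro hik
      have h1 : gammaPath sel p j (i + 1) = sel (j - i - 1) (gammaPath sel p j i) := rfl
      rw [h1, ih (by omega)]
      exact hE i hik (j - i - 1) (by omega)
  -- now the last step
  obtain ⟨k', rfl⟩ : ∃ k', k = k' + 1 := ⟨k - 1, by omega⟩
  have hq : ellSucc ω (A k') = ⊤ := hinC
  have hAk : A (k' + 1) = sel 0 (A k') := by
    have h0 : A (k' + 1) = sel (k' + 1 - k' - 1) (A k') := rfl
    rw [h0, show k' + 1 - k' - 1 = 0 from by omega]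
  have hbs := backbone_sel hsel hq L (by rw [← hAk]; exact hL)
  constructor
  · intro j hjk hjkL
    have h1 : gammaPath sel p j (k' + 1) = sel (j - k' - 1) (gammaPath sel p j k') := rfl
    rw [h1, hpre j hjk k' (by omega)]
    have hidx : j - k' - 1 = j - (k' + 1) := by omega
    rw [hidx, hAk]
    exact hbs.1 (j - (k' + 1)) (by omega)
  · intro hcontra
    have h1 : gammaPath sel p (k' + 1 + L + 1) (k' + 1)
        = sel (k' + 1 + L + 1 - k' - 1) (gammaPath sel p (k' + 1 + L + 1) k') := rfl
    rw [h1, hpre (k' + 1 + L + 1) (by omega) k' (by omega)] at hcontra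
    have hidx : k' + 1 + L + 1 - k' - 1 = L + 1 := by omega
    rw [hidx, hAk] at hcontra
    exact hbs.2 hcontra
end
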